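/- Let h, s, v, m, w be natural numbers. If a holey Schröder design of type h^s v^1 exists and a holey Schröder design of type (hs)^m w^1 exists, then a holey Schröder design of type h^(sm) (w+v)^1 exists. -/

import Mathlib

open scoped Classical

namespace HSDaux
open Multiset

def quadMap {α β : Type} (f : α → β) (b : α × α × α × α) : β × β × β × β :=
  (f b.1, f b.2.1, f b.2.2.1, f b.2.2.2)

lemma countP_mono {α : Type} {p q : α → Prop} [DecidablePred p] [DecidablePred q]
    (s : Multiset α) (h : ∀ a ∈ s, p a → q a) : countP p s ≤ countP q s := by
  induction s using Multiset.induction with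
  | empty => simp
  | cons a s ih =>
    rw [countP_cons, countP_cons]
    have h1 := h a (mem_cons_self a s)
    have h2 : countP p s ≤ countP q s := ih (fun b hb => h b (mem_cons_of_mem hb))
    by_cases hp : p a
    · have hq := h1 hp
      simp only [hp, hq, if_true]; omega
    · by_cases hq : q a <;> simp only [hp, hq, if_true, if_false] <;> omega

lemma two_le_countP {α : Type} (p : α → Prop) [DecidablePred p] {q : Multiset α} {a b : α}
    (ha : a ∈ q) (hb : b ∈ q) (hab : a ≠ b) (hpa : p a) (hpb : p b) : 2 ≤ countP p q := by
  classical
  rw [countP_eq_card_filter]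
  have hbf : b ∈ q.filter p := mem_filter.mpr ⟨hb, hpb⟩
  have haf : a ∈ (q.filter p).erase b :=
    (Multiset.mem_erase_of_ne hab).mpr (mem_filter.mpr ⟨ha, hpa⟩)
  have h1 : 0 < card ((q.filter p).erase b) := card_pos_iff_exists_mem.mpr ⟨a, haf⟩
  have hce : b ::ₘ (q.filter p).erase b = q.filter p := Multiset.cons_erase hbf
  have h2 := congrArg card hce
  rw [Multiset.card_cons] at h2
  omega

lemma countP_sum {α β : Type} (p : α → Prop) [DecidablePred p] (t : Finset β)
    (f : β → Multiset α) : countP p (∑ i ∈ t, f i) = ∑ i ∈ t, countP p (f i) := by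
  classical
  induction t using Finset.induction with
  | empty => simp
  | insert a t' hx ih => rw [Finset.sum_insert hx, Finset.sum_insert hx, countP_add, ih]

lemma countP_map_le {α β : Type} (f : α → β) (q : Multiset α) (p : β → Prop)
    {instP : DecidablePred p}
    (H : Finset α) {instH : DecidablePred (fun a : α => a ∈ H)} (himp : ∀ a ∈ q, p (f a) → a ∈ H) :
    countP p (Multiset.map f q) ≤ countP (fun a => a ∈ H) q := by
  induction q using Multiset.induction with
  | empty => simp
  | cons a q ih =>
    rw [Multiset.map_cons, countP_cons, countP_cons]
    have h1 := himp a (mem_cons_self a q)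
    have h2 := ih (fun b hb hpb => himp b (mem_cons_of_mem hb) hpb)
    by_cases hp : p (f a)
    · simp only [hp, h1 hp, if_true]; omega
    · simp only [hp, if_false]
      split_ifs <;> omega

section PartMap

variable {A T T' : Type} {n : ℕ}

def partMap (hF : Fin (n+1) → Finset A) (idx : A → Fin (n+1)) (hmem : ∀ a, a ∈ hF (idx a))
    (e : ∀ j : Fin n, {x // x ∈ hF j.castSucc} ≃ T) (el : {x // x ∈ hF (Fin.last n)} ≃ T')
    (a : A) : (Fin n × T) ⊕ T' :=
  if hlt : (idx a : ℕ) < n then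
    Sum.inl (⟨(idx a : ℕ), hlt⟩, e ⟨(idx a : ℕ), hlt⟩ ⟨a, by
      have hc : (⟨((idx a : ℕ)), hlt⟩ : Fin n).castSucc = idx a := by
        apply Fin.ext; simp
      rw [hc]; exact hmem a⟩)
  else
    Sum.inr (el ⟨a, by
      have hc : idx a = Fin.last n := by
        apply Fin.ext; have := (idx a).isLt; simp only [Fin.val_last]; omega
      rw [← hc]; exact hmem a⟩)

variable {hF : Fin (n+1) → Finset A} {idx : A → Fin (n+1)} {hmem : ∀ a, a ∈ hF (idx a)}
  {e : ∀ j : Fin n, {x // x ∈ hF j.castSucc} ≃ T} {el : {x // x ∈ hF (Fin.last n)} ≃ T'}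

lemma pm_left {a : A} {j : Fin n} {t : T} (hpm : partMap hF idx hmem e el a = Sum.inl (j, t)) :
    a ∈ hF j.castSucc := by
  unfold partMap at hpm
  split at hpm
  · rw [Sum.inl.injEq, Prod.mk.injEq] at hpm
    obtain ⟨hj, -⟩ := hpm
    subst hj
    have hc : (⟨((idx a : ℕ)), ‹_›⟩ : Fin n).castSucc = idx a := by apply Fin.ext; simp
    rw [hc]; exact hmem a
  · exact absurd hpm (by simp)

lemma pm_right {a : A} {t' : T'} (hpm : partMap hF idx hmem e el a = Sum.inr t') :
    a ∈ hF (Fin.last n) := by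
  unfold partMap at hpm
  split at hpm
  · exact absurd hpm (by simp)
  · rename_i hlt
    have hc : idx a = Fin.last n := by
      apply Fin.ext; have := (idx a).isLt; simp only [Fin.val_last]; omega
    rw [← hc]; exact hmem a

lemma pm_inj : Function.Injective (partMap hF idx hmem e el) := by
  intro a b hab
  unfold partMap at hab
  split at hab <;> split at hab
  · rw [Sum.inl.injEq, Prod.mk.injEq] at hab
    obtain ⟨hj, ht⟩ := hab
    have key : ∀ (j1 j2 : Fin n), j1 = j2 → ∀ (p1 : a ∈ hF j1.castSucc) (p2 : b ∈ hF j2.castSucc),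
        e j1 ⟨a, p1⟩ = e j2 ⟨b, p2⟩ → a = b := by
      rintro j1 _ rfl p1 p2 hee
      exact congrArg Subtype.val ((e j1).injective hee)
    exact key _ _ hj _ _ ht
  · exact absurd hab (by simp)
  · exact absurd hab (by simp)
  · rw [Sum.inr.injEq] at hab
    exact congrArg Subtype.val (el.injective hab)

lemma pm_surj_left (hu : ∀ a j, a ∈ hF j → idx a = j) (j : Fin n) (t : T) :
    ∃ a, a ∈ hF j.castSucc ∧ partMap hF idx hmem e el a = Sum.inl (j, t) := by
  refine ⟨((e j).symm t : {x // x ∈ hF j.castSucc}).1, ((e j).symm t).2, ?_⟩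
  set a := ((e j).symm t).1 with ha
  have hidx : idx a = j.castSucc := hu a _ ((e j).symm t).2
  have hlt : (idx a : ℕ) < n := by rw [hidx]; simpa using j.isLt
  unfold partMap
  rw [dif_pos hlt, Sum.inl.injEq, Prod.mk.injEq]
  have hjj : (⟨((idx a : ℕ)), hlt⟩ : Fin n) = j := by
    apply Fin.ext
    show (idx a : ℕ) = (j : ℕ)
    rw [hidx, Fin.coe_castSucc]
  refine ⟨hjj, ?_⟩
  have key : ∀ (j1 j2 : Fin n), j1 = j2 → ∀ (p1 : a ∈ hF j1.castSucc) (p2 : a ∈ hF j2.castSucc),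
      e j1 ⟨a, p1⟩ = e j2 ⟨a, p2⟩ := by
    rintro j1 _ rfl p1 p2; rfl
  rw [key _ j hjj _ ((e j).symm t).2, Subtype.coe_eta, Equiv.apply_symm_apply]

lemma pm_surj_right (hu : ∀ a j, a ∈ hF j → idx a = j) (t' : T') :
    ∃ a, a ∈ hF (Fin.last n) ∧ partMap hF idx hmem e el a = Sum.inr t' := by
  refine ⟨(el.symm t' : {x // x ∈ hF (Fin.last n)}).1, (el.symm t').2, ?_⟩
  set a := (el.symm t').1 with ha
  have hidx : idx a = Fin.last n := hu a _ (el.symm t').2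
  have hlt : ¬ ((idx a : ℕ) < n) := by rw [hidx]; simp
  unfold partMap
  rw [dif_neg hlt, Sum.inr.injEq, Subtype.coe_eta, Equiv.apply_symm_apply]

end PartMap

section Construction

variable {h s v m w : ℕ} {Z Y : Type}

abbrev XT (h s v m w : ℕ) : Type := (Fin m × Fin s × Fin h) ⊕ (Fin w ⊕ Fin v)

variable (hZ : Fin (s+1) → Finset Z) (idxZ : Z → Fin (s+1)) (hmemZ : ∀ a, a ∈ hZ (idxZ a))
  (eZ : ∀ j : Fin s, {x // x ∈ hZ j.castSucc} ≃ Fin h)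
  (eZl : {x // x ∈ hZ (Fin.last s)} ≃ Fin v)
  (hY : Fin (m+1) → Finset Y) (idxY : Y → Fin (m+1)) (hmemY : ∀ a, a ∈ hY (idxY a))
  (eY : ∀ j : Fin m, {x // x ∈ hY j.castSucc} ≃ Fin s × Fin h)
  (eYl : {x // x ∈ hY (Fin.last m)} ≃ Fin w)

def smallMap (w : ℕ) (i : Fin m) (z : Z) : XT h s v m w :=
  match partMap hZ idxZ hmemZ eZ eZl z with
  | .inl p => .inl (i, p)
  | .inr r => .inr (.inr r)

def bigMap (v : ℕ) (y : Y) : XT h s v m w :=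
  match partMap hY idxY hmemY eY eYl y with
  | .inl p => .inl p
  | .inr r => .inr (.inl r)

lemma smallMap_inj (i : Fin m) : Function.Injective (smallMap hZ idxZ hmemZ eZ eZl w i) := by
  intro a b hab
  apply pm_inj (hF := hZ) (idx := idxZ) (hmem := hmemZ) (e := eZ) (el := eZl)
  unfold smallMap at hab
  cases hpa : partMap hZ idxZ hmemZ eZ eZl a <;> cases hpb : partMap hZ idxZ hmemZ eZ eZl b <;>
    rw [hpa, hpb] at hab <;> simp_all

lemma bigMap_inj : Function.Injective (bigMap hY idxY hmemY eY eYl v) := by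
  intro a b hab
  apply pm_inj (hF := hY) (idx := idxY) (hmem := hmemY) (e := eY) (el := eYl)
  unfold bigMap at hab
  cases hpa : partMap hY idxY hmemY eY eYl a <;> cases hpb : partMap hY idxY hmemY eY eYl b <;>
    rw [hpa, hpb] at hab <;> simp_all

lemma smallMap_shape (i : Fin m) (z : Z) :
    (∃ p : Fin s × Fin h, smallMap hZ idxZ hmemZ eZ eZl w i z = .inl (i, p)) ∨
    (∃ r : Fin v, smallMap hZ idxZ hmemZ eZ eZl w i z = .inr (.inr r)) := by
  unfold smallMap
  cases hp : partMap hZ idxZ hmemZ eZ eZl z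
  · exact Or.inl ⟨_, rfl⟩
  · exact Or.inr ⟨_, rfl⟩

lemma bigMap_shape (y : Y) :
    (∃ p : Fin m × Fin s × Fin h, bigMap hY idxY hmemY eY eYl v y = .inl p) ∨
    (∃ r : Fin w, bigMap hY idxY hmemY eY eYl v y = .inr (.inl r)) := by
  unfold bigMap
  cases hp : partMap hY idxY hmemY eY eYl y
  · exact Or.inl ⟨_, rfl⟩
  · exact Or.inr ⟨_, rfl⟩

lemma smallMap_memS {i i' : Fin m} {z : Z} {k : Fin s} {t : Fin h}
    (hsm : smallMap hZ idxZ hmemZ eZ eZl w i z = .inl (i', k, t)) :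
    i' = i ∧ z ∈ hZ k.castSucc := by
  unfold smallMap at hsm
  cases hp : partMap hZ idxZ hmemZ eZ eZl z <;> rw [hp] at hsm
  · rename_i p
    simp only [Sum.inl.injEq, Prod.mk.injEq] at hsm
    obtain ⟨hi, hkt⟩ := hsm
    refine ⟨hi.symm, ?_⟩
    exact pm_left (t := t) (by rw [hp, hkt])
  · simp at hsm

lemma smallMap_memL {i : Fin m} {z : Z} {r : Fin v}
    (hsm : smallMap hZ idxZ hmemZ eZ eZl w i z = .inr (.inr r)) : z ∈ hZ (Fin.last s) := by
  unfold smallMap at hsm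
  cases hp : partMap hZ idxZ hmemZ eZ eZl z <;> rw [hp] at hsm
  · simp at hsm
  · simp only [Sum.inr.injEq] at hsm
    exact pm_right (by rw [hp, hsm])

lemma bigMap_memS {y : Y} {i : Fin m} {k : Fin s} {t : Fin h}
    (hbm : bigMap hY idxY hmemY eY eYl v y = .inl (i, k, t)) : y ∈ hY i.castSucc := by
  unfold bigMap at hbm
  cases hp : partMap hY idxY hmemY eY eYl y <;> rw [hp] at hbm
  · simp only [Sum.inl.injEq] at hbm
    exact pm_left (by rw [hp, hbm])
  · simp at hbm

lemma bigMap_memL {y : Y} {r : Fin w}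
    (hbm : bigMap hY idxY hmemY eY eYl v y = .inr (.inl r)) : y ∈ hY (Fin.last m) := by
  unfold bigMap at hbm
  cases hp : partMap hY idxY hmemY eY eYl y <;> rw [hp] at hbm
  · simp at hbm
  · simp only [Sum.inr.injEq, Sum.inl.injEq] at hbm
    exact pm_right (by rw [hp, hbm])

lemma smallMap_surjS (hu : ∀ a j, a ∈ hZ j → idxZ a = j) (i : Fin m) (k : Fin s) (t : Fin h) :
    ∃ z, z ∈ hZ k.castSucc ∧ smallMap hZ idxZ hmemZ eZ eZl w i z = .inl (i, k, t) := by
  obtain ⟨z, hz, hpm⟩ := pm_surj_left (e := eZ) (el := eZl) (hmem := hmemZ) hu k t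
  exact ⟨z, hz, by unfold smallMap; rw [hpm]⟩

lemma smallMap_surjL (hu : ∀ a j, a ∈ hZ j → idxZ a = j) (i : Fin m) (r : Fin v) :
    ∃ z, z ∈ hZ (Fin.last s) ∧ smallMap hZ idxZ hmemZ eZ eZl w i z = .inr (.inr r) := by
  obtain ⟨z, hz, hpm⟩ := pm_surj_right (e := eZ) (el := eZl) (hmem := hmemZ) hu r
  exact ⟨z, hz, by unfold smallMap; rw [hpm]⟩

lemma bigMap_surjS (hu : ∀ a j, a ∈ hY j → idxY a = j) (i : Fin m) (k : Fin s) (t : Fin h) :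
    ∃ y, y ∈ hY i.castSucc ∧ bigMap hY idxY hmemY eY eYl v y = .inl (i, k, t) := by
  obtain ⟨y, hy, hpm⟩ := pm_surj_left (e := eY) (el := eYl) (hmem := hmemY) hu i (k, t)
  exact ⟨y, hy, by unfold bigMap; rw [hpm]⟩

lemma bigMap_surjL (hu : ∀ a j, a ∈ hY j → idxY a = j) (r : Fin w) :
    ∃ y, y ∈ hY (Fin.last m) ∧ bigMap hY idxY hmemY eY eYl v y = .inr (.inl r) := by
  obtain ⟨y, hy, hpm⟩ := pm_surj_right (e := eY) (el := eYl) (hmem := hmemY) hu r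
  exact ⟨y, hy, by unfold bigMap; rw [hpm]⟩

end Construction

section NewHoles

variable {h s v m w : ℕ}

lemma hole_lt {i : Fin m} {k : Fin s} : (k : ℕ) + s * (i : ℕ) < s * m := by
  calc (k : ℕ) + s * (i : ℕ) < s + s * (i : ℕ) := by omega
  _ = s * ((i : ℕ) + 1) := by ring
  _ ≤ s * m := Nat.mul_le_mul_left s i.isLt

def newHoles (h s v m w : ℕ) (j : Fin (s*m+1)) : Finset (XT h s v m w) :=
  if hj : (j : ℕ) < s*m then
    Finset.image (fun a : Fin h => Sum.inl (⟨(j:ℕ)/s, by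
        have hs : 0 < s := Nat.pos_of_ne_zero (by rintro rfl; simp at hj)
        exact (Nat.div_lt_iff_lt_mul hs).mpr (Nat.lt_of_lt_of_eq hj (Nat.mul_comm s m))⟩,
      ⟨(j:ℕ)%s, Nat.mod_lt _ (Nat.pos_of_ne_zero (by rintro rfl; simp at hj))⟩, a)) Finset.univ
  else Finset.image Sum.inr Finset.univ

lemma mem_newHoles_inl {j : Fin (s*m+1)} {i : Fin m} {k : Fin s} {a : Fin h} :
    (Sum.inl (i, k, a) : XT h s v m w) ∈ newHoles h s v m w j ↔
      (j : ℕ) = (k : ℕ) + s * (i : ℕ) := by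
  unfold newHoles
  split
  · rename_i hj
    have hs : 0 < s := Nat.pos_of_ne_zero (by rintro rfl; simp at hj)
    simp only [Finset.mem_image, Finset.mem_univ, true_and, Sum.inl.injEq, Prod.mk.injEq]
    constructor
    · rintro ⟨b, ⟨hi, hk, hb⟩⟩
      have h1 : (j:ℕ)/s = (i:ℕ) := congrArg Fin.val hi
      have h2 : (j:ℕ)%s = (k:ℕ) := congrArg Fin.val hk
      have h3 := Nat.mod_add_div (j:ℕ) s
      rw [h1, h2] at h3
      omega
    · intro hj'
      refine ⟨a, ?_, ?_, rfl⟩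
      · apply Fin.ext
        show (j:ℕ)/s = (i:ℕ)
        rw [hj', Nat.add_mul_div_left _ _ hs, Nat.div_eq_of_lt k.isLt, Nat.zero_add]
      · apply Fin.ext
        show (j:ℕ)%s = (k:ℕ)
        rw [hj', Nat.add_mul_mod_self_left, Nat.mod_eq_of_lt k.isLt]
  · rename_i hj
    simp only [Finset.mem_image, Finset.mem_univ, true_and]
    constructor
    · rintro ⟨b, hb⟩; simp at hb
    · intro hj'
      exact absurd (hj' ▸ (hole_lt (i := i) (k := k))) hj

lemma mem_newHoles_inr {j : Fin (s*m+1)} {r : Fin w ⊕ Fin v} :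
    (Sum.inr r : XT h s v m w) ∈ newHoles h s v m w j ↔ (j : ℕ) = s * m := by
  unfold newHoles
  split
  · rename_i hj
    simp only [Finset.mem_image, Finset.mem_univ, true_and]
    constructor
    · rintro ⟨b, hb⟩; simp at hb
    · intro hj'; omega
  · rename_i hj
    have : (j : ℕ) = s*m := by have := j.isLt; omega
    simp [this]

lemma card_newHoles_lt {j : Fin (s*m+1)} (hj : (j : ℕ) < s*m) :
    (newHoles h s v m w j).card = h := by
  unfold newHoles
  rw [dif_pos hj, Finset.card_image_of_injective _ (fun a b hab => by simpa using hab),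
    Finset.card_univ, Fintype.card_fin]

lemma card_newHoles_last : (newHoles h s v m w (Fin.last (s*m))).card = w + v := by
  unfold newHoles
  rw [dif_neg (by simp), Finset.card_image_of_injective _ Sum.inr_injective, Finset.card_univ]
  simp

end NewHoles

section Counting
open Multiset

lemma countP_quad_map_all {α β : Type} {f : α → β} (hf : Function.Injective f)
    (B : Multiset (α×α×α×α)) (x₀ y₀ : α) :
    (countP (fun b => s(b.1,b.2.1)=s(f x₀,f y₀) ∨ s(b.2.2.1,b.2.2.2)=s(f x₀,f y₀))
        (B.map (quadMap f))
      = countP (fun b => s(b.1,b.2.1)=s(x₀,y₀) ∨ s(b.2.2.1,b.2.2.2)=s(x₀,y₀)) B) ∧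
    (countP (fun b => s(b.1,b.2.2.1)=s(f x₀,f y₀) ∨ s(b.2.1,b.2.2.2)=s(f x₀,f y₀))
        (B.map (quadMap f))
      = countP (fun b => s(b.1,b.2.2.1)=s(x₀,y₀) ∨ s(b.2.1,b.2.2.2)=s(x₀,y₀)) B) ∧
    (countP (fun b => s(b.1,b.2.2.2)=s(f x₀,f y₀) ∨ s(b.2.1,b.2.2.1)=s(f x₀,f y₀))
        (B.map (quadMap f))
      = countP (fun b => s(b.1,b.2.2.2)=s(x₀,y₀) ∨ s(b.2.1,b.2.2.1)=s(x₀,y₀)) B) := by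
  have hs2 : ∀ a b : α, (s(f a, f b) = s(f x₀, f y₀)) ↔ (s(a, b) = s(x₀, y₀)) := by
    intro a b; simp [Sym2.eq_iff, hf.eq_iff]
  refine ⟨?_, ?_, ?_⟩ <;>
  · rw [Multiset.countP_map, ← Multiset.countP_eq_card_filter]
    refine Multiset.countP_congr rfl fun b _ => ?_
    simp only [quadMap]
    rw [propext (hs2 _ _), propext (hs2 _ _)]

lemma countP_quad_zero_all {α β : Type} (f : α → β) (B : Multiset (α×α×α×α)) (x y : β)
    (hno : ∀ a b : α, s(f a, f b) ≠ s(x, y)) :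
    (countP (fun b => s(b.1,b.2.1)=s(x,y) ∨ s(b.2.2.1,b.2.2.2)=s(x,y)) (B.map (quadMap f)) = 0) ∧
    (countP (fun b => s(b.1,b.2.2.1)=s(x,y) ∨ s(b.2.1,b.2.2.2)=s(x,y)) (B.map (quadMap f)) = 0) ∧
    (countP (fun b => s(b.1,b.2.2.2)=s(x,y) ∨ s(b.2.1,b.2.2.1)=s(x,y)) (B.map (quadMap f)) = 0) := by
  classical
  refine ⟨?_, ?_, ?_⟩ <;>
  · rw [Multiset.countP_eq_zero]
    rintro b' hb'
    obtain ⟨b, -, rfl⟩ := Multiset.mem_map.mp hb'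
    rintro (hp | hp) <;> exact hno _ _ hp

lemma countP_quad_zero_hole {α β : Type} {f : α → β} (hf : Function.Injective f)
    {B : Multiset (α×α×α×α)} {H : Finset α}
    (hblk : ∀ b ∈ B, countP (fun z => z ∈ H) ({b.1,b.2.1,b.2.2.1,b.2.2.2} : Multiset α) ≤ 1)
    {x₀ y₀ : α} (hx : x₀ ∈ H) (hy : y₀ ∈ H) (hne : x₀ ≠ y₀) :
    (countP (fun b => s(b.1,b.2.1)=s(f x₀,f y₀) ∨ s(b.2.2.1,b.2.2.2)=s(f x₀,f y₀))
        (B.map (quadMap f)) = 0) ∧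
    (countP (fun b => s(b.1,b.2.2.1)=s(f x₀,f y₀) ∨ s(b.2.1,b.2.2.2)=s(f x₀,f y₀))
        (B.map (quadMap f)) = 0) ∧
    (countP (fun b => s(b.1,b.2.2.2)=s(f x₀,f y₀) ∨ s(b.2.1,b.2.2.1)=s(f x₀,f y₀))
        (B.map (quadMap f)) = 0) := by
  classical
  refine ⟨?_, ?_, ?_⟩ <;>
  · rw [Multiset.countP_eq_zero]
    rintro b' hb'
    obtain ⟨b, hbB, rfl⟩ := Multiset.mem_map.mp hb'
    have hble := hblk b hbB
    rintro (hp | hp) <;> simp only [quadMap] at hp <;>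
      rw [Sym2.eq_iff] at hp <;>
      rcases hp with ⟨e1, e2⟩ | ⟨e1, e2⟩ <;>
      · have m1 := hf e1
        have m2 := hf e2
        have h2 := two_le_countP (fun z => z ∈ H)
          (q := ({b.1, b.2.1, b.2.2.1, b.2.2.2} : Multiset α)) (a := x₀) (b := y₀)
          (by simp [← m1, ← m2]) (by simp [← m1, ← m2]) hne hx hy
        omega

end Counting

end HSDaux

open Classical in
/-- Existence of a holey Schröder design of type `h^n u^1`: `n` holes of size `h`
and one hole of size `u`. Blocks are ordered quadruples; the pairs in a block
`(a,b,c,d)` are colored `{a,b},{c,d}` with color 1, `{a,c},{b,d}` with color 2,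
`{a,d},{b,c}` with color 3; every pair of points from distinct holes occurs with
each of the three colors in exactly one block. -/
def HSDExists (h n u : ℕ) : Prop :=
  ∃ (X : Type) (_ : Fintype X) (holes : Fin (n + 1) → Finset X)
    (B : Multiset (X × X × X × X)),
    -- the first `n` holes have size `h`, the last hole has size `u`
    (∀ i : Fin (n + 1), (i : ℕ) < n → (holes i).card = h) ∧
    (holes (Fin.last n)).card = u ∧
    -- the holes partition the point set
    (∀ i j : Fin (n + 1), i ≠ j → Disjoint (holes i) (holes j)) ∧
    (∀ x : X, ∃ i, x ∈ holes i) ∧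
    -- each block meets each hole in at most one point
    (∀ b ∈ B, ∀ i : Fin (n + 1),
      Multiset.countP (fun x => x ∈ holes i)
        ({b.1, b.2.1, b.2.2.1, b.2.2.2} : Multiset X) ≤ 1) ∧
    -- every pair of points from distinct holes occurs with each color in exactly one block
    (∀ x y : X, (∀ i, ¬(x ∈ holes i ∧ y ∈ holes i)) →
      Multiset.countP
        (fun b => s(b.1, b.2.1) = s(x, y) ∨ s(b.2.2.1, b.2.2.2) = s(x, y)) B = 1 ∧
      Multiset.countP
        (fun b => s(b.1, b.2.2.1) = s(x, y) ∨ s(b.2.1, b.2.2.2) = s(x, y)) B = 1 ∧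
      Multiset.countP
        (fun b => s(b.1, b.2.2.2) = s(x, y) ∨ s(b.2.1, b.2.2.1) = s(x, y)) B = 1)

set_option maxHeartbeats 1600000 in
theorem hsd_filling_holes (h s v m w : ℕ)
    (h1 : HSDExists h s v) (h2 : HSDExists (h * s) m w) :
    HSDExists h (s * m) (w + v) := by
  classical
  obtain ⟨Z, iZ, hZ, BZ, hZc, hZl, hZd, hZcov, hZb, hZp⟩ := h1
  obtain ⟨Y, iY, hY, BY, hYc, hYl, hYd, hYcov, hYb, hYp⟩ := h2
  choose idxZ hmemZ using hZcov
  choose idxY hmemY using hYcov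
  have uZ : ∀ a j, a ∈ hZ j → idxZ a = j := fun a j hj => by
    by_contra hne
    exact Finset.disjoint_left.mp (hZd _ _ hne) (hmemZ a) hj
  have uY : ∀ a j, a ∈ hY j → idxY a = j := fun a j hj => by
    by_contra hne
    exact Finset.disjoint_left.mp (hYd _ _ hne) (hmemY a) hj
  have eZ : ∀ j : Fin s, {x // x ∈ hZ j.castSucc} ≃ Fin h := fun j =>
    Finset.equivFinOfCardEq (hZc j.castSucc (by simpa using j.isLt))
  have eZl : {x // x ∈ hZ (Fin.last s)} ≃ Fin v := Finset.equivFinOfCardEq hZl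
  have eY : ∀ j : Fin m, {x // x ∈ hY j.castSucc} ≃ Fin s × Fin h := fun j =>
    (Finset.equivFinOfCardEq (hYc j.castSucc (by simpa using j.isLt))).trans
      ((finCongr (by ring)).trans finProdFinEquiv.symm)
  have eYl : {x // x ∈ hY (Fin.last m)} ≃ Fin w := Finset.equivFinOfCardEq hYl
  -- facts about the two point maps
  have bigInj : Function.Injective (HSDaux.bigMap hY idxY hmemY eY eYl v) :=
    HSDaux.bigMap_inj hY idxY hmemY eY eYl
  have smlInj : ∀ i : Fin m,
      Function.Injective (HSDaux.smallMap hZ idxZ hmemZ eZ eZl w i) :=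
    fun i => HSDaux.smallMap_inj hZ idxZ hmemZ eZ eZl i
  have bigShape : ∀ y' : Y,
      (∃ p : Fin m × Fin s × Fin h, HSDaux.bigMap hY idxY hmemY eY eYl v y' = .inl p) ∨
      (∃ r : Fin w, HSDaux.bigMap hY idxY hmemY eY eYl v y' = .inr (.inl r)) :=
    fun y' => HSDaux.bigMap_shape hY idxY hmemY eY eYl y'
  have smlShape : ∀ (i : Fin m) (z : Z),
      (∃ p : Fin s × Fin h, HSDaux.smallMap hZ idxZ hmemZ eZ eZl w i z = .inl (i, p)) ∨
      (∃ r : Fin v, HSDaux.smallMap hZ idxZ hmemZ eZ eZl w i z = .inr (.inr r)) :=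
    fun i z => HSDaux.smallMap_shape hZ idxZ hmemZ eZ eZl i z
  have bigMemS : ∀ (y' : Y) (i : Fin m) (k : Fin s) (t : Fin h),
      HSDaux.bigMap hY idxY hmemY eY eYl v y' = .inl (i, k, t) → y' ∈ hY i.castSucc :=
    fun y' i k t hh => HSDaux.bigMap_memS hY idxY hmemY eY eYl hh
  have bigMemL : ∀ (y' : Y) (r : Fin w),
      HSDaux.bigMap hY idxY hmemY eY eYl v y' = .inr (.inl r) → y' ∈ hY (Fin.last m) :=
    fun y' r hh => HSDaux.bigMap_memL hY idxY hmemY eY eYl hh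
  have smlMemS : ∀ (i i' : Fin m) (z : Z) (k : Fin s) (t : Fin h),
      HSDaux.smallMap hZ idxZ hmemZ eZ eZl w i z = .inl (i', k, t) →
        i' = i ∧ z ∈ hZ k.castSucc :=
    fun i i' z k t hh => HSDaux.smallMap_memS hZ idxZ hmemZ eZ eZl hh
  have smlMemL : ∀ (i : Fin m) (z : Z) (r : Fin v),
      HSDaux.smallMap hZ idxZ hmemZ eZ eZl w i z = .inr (.inr r) → z ∈ hZ (Fin.last s) :=
    fun i z r hh => HSDaux.smallMap_memL hZ idxZ hmemZ eZ eZl hh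
  have bigSurjS : ∀ (i : Fin m) (k : Fin s) (t : Fin h), ∃ y', y' ∈ hY i.castSucc ∧
      HSDaux.bigMap hY idxY hmemY eY eYl v y' = .inl (i, k, t) :=
    HSDaux.bigMap_surjS hY idxY hmemY eY eYl uY
  have bigSurjL : ∀ r : Fin w, ∃ y', y' ∈ hY (Fin.last m) ∧
      HSDaux.bigMap hY idxY hmemY eY eYl v y' = .inr (.inl r) :=
    HSDaux.bigMap_surjL hY idxY hmemY eY eYl uY
  have smlSurjS : ∀ (i : Fin m) (k : Fin s) (t : Fin h), ∃ z, z ∈ hZ k.castSucc ∧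
      HSDaux.smallMap hZ idxZ hmemZ eZ eZl w i z = .inl (i, k, t) :=
    HSDaux.smallMap_surjS hZ idxZ hmemZ eZ eZl uZ
  have smlSurjL : ∀ (i : Fin m) (r : Fin v), ∃ z, z ∈ hZ (Fin.last s) ∧
      HSDaux.smallMap hZ idxZ hmemZ eZ eZl w i z = .inr (.inr r) :=
    HSDaux.smallMap_surjL hZ idxZ hmemZ eZ eZl uZ
  refine ⟨HSDaux.XT h s v m w, inferInstance, HSDaux.newHoles h s v m w,
    BY.map (HSDaux.quadMap (HSDaux.bigMap hY idxY hmemY eY eYl v)) +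
      ∑ i : Fin m, BZ.map (HSDaux.quadMap (HSDaux.smallMap hZ idxZ hmemZ eZ eZl w i)),
    ?_, ?_, ?_, ?_, ?_, ?_⟩
  · intro j hj
    exact HSDaux.card_newHoles_lt hj
  · exact HSDaux.card_newHoles_last
  · intro j j' hne
    rw [Finset.disjoint_left]
    intro x hx hx'
    rcases x with ⟨i, k, a⟩ | r
    · rw [HSDaux.mem_newHoles_inl] at hx hx'
      exact hne (Fin.ext (hx.trans hx'.symm))
    · rw [HSDaux.mem_newHoles_inr] at hx hx'
      exact hne (Fin.ext (hx.trans hx'.symm))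
  · intro x
    rcases x with ⟨i, k, a⟩ | r
    · exact ⟨⟨(k : ℕ) + s * (i : ℕ), Nat.lt_succ_of_lt HSDaux.hole_lt⟩,
        HSDaux.mem_newHoles_inl.mpr rfl⟩
    · exact ⟨Fin.last (s * m), HSDaux.mem_newHoles_inr.mpr (by simp)⟩
  · -- block condition
    intro b hb j
    rcases Multiset.mem_add.mp hb with hb | hb
    · obtain ⟨c, hc, rfl⟩ := Multiset.mem_map.mp hb
      have hms : ({(HSDaux.quadMap (HSDaux.bigMap hY idxY hmemY eY eYl v) c).1,
          (HSDaux.quadMap (HSDaux.bigMap hY idxY hmemY eY eYl v) c).2.1,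
          (HSDaux.quadMap (HSDaux.bigMap hY idxY hmemY eY eYl v) c).2.2.1,
          (HSDaux.quadMap (HSDaux.bigMap hY idxY hmemY eY eYl v) c).2.2.2} :
            Multiset (HSDaux.XT h s v m w)) =
          Multiset.map (HSDaux.bigMap hY idxY hmemY eY eYl v)
            {c.1, c.2.1, c.2.2.1, c.2.2.2} := by
        simp [HSDaux.quadMap]
      rw [hms]
      by_cases hj : (j : ℕ) < s * m
      · have hs0 : 0 < s := Nat.pos_of_ne_zero (by rintro rfl; simp at hj)
        have hdm : (j : ℕ) / s < m :=
          (Nat.div_lt_iff_lt_mul hs0).mpr (Nat.lt_of_lt_of_eq hj (Nat.mul_comm s m))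
        refine le_trans (HSDaux.countP_map_le _ _ _ _ ?_)
          (hYb c hc ⟨(j : ℕ) / s, by omega⟩)
        intro z hz hmz
        rcases bigShape z with ⟨⟨iz, kz, az⟩, hpz⟩ | ⟨rz, hpz⟩
        · rw [hpz, HSDaux.mem_newHoles_inl] at hmz
          have hmm := bigMemS z iz kz az hpz
          have hcv : (iz.castSucc : Fin (m + 1)) = ⟨(j : ℕ) / s, by omega⟩ := by
            apply Fin.ext
            simp only [Fin.coe_castSucc]
            rw [hmz, Nat.add_mul_div_left _ _ hs0, Nat.div_eq_of_lt kz.isLt, Nat.zero_add]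
          rw [← hcv]
          exact hmm
        · rw [hpz, HSDaux.mem_newHoles_inr] at hmz
          omega
      · refine le_trans (HSDaux.countP_map_le _ _ _ _ ?_) (hYb c hc (Fin.last m))
        intro z hz hmz
        rcases bigShape z with ⟨⟨iz, kz, az⟩, hpz⟩ | ⟨rz, hpz⟩
        · rw [hpz, HSDaux.mem_newHoles_inl] at hmz
          have := HSDaux.hole_lt (i := iz) (k := kz)
          omega
        · exact bigMemL z rz hpz
    · rw [Multiset.mem_sum] at hb
      obtain ⟨i, -, hb⟩ := hb
      obtain ⟨c, hc, rfl⟩ := Multiset.mem_map.mp hb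
      have hms : ({(HSDaux.quadMap (HSDaux.smallMap hZ idxZ hmemZ eZ eZl w i) c).1,
          (HSDaux.quadMap (HSDaux.smallMap hZ idxZ hmemZ eZ eZl w i) c).2.1,
          (HSDaux.quadMap (HSDaux.smallMap hZ idxZ hmemZ eZ eZl w i) c).2.2.1,
          (HSDaux.quadMap (HSDaux.smallMap hZ idxZ hmemZ eZ eZl w i) c).2.2.2} :
            Multiset (HSDaux.XT h s v m w)) =
          Multiset.map (HSDaux.smallMap hZ idxZ hmemZ eZ eZl w i)
            {c.1, c.2.1, c.2.2.1, c.2.2.2} := by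
        simp [HSDaux.quadMap]
      rw [hms]
      by_cases hj : (j : ℕ) < s * m
      · have hs0 : 0 < s := Nat.pos_of_ne_zero (by rintro rfl; simp at hj)
        have hdm : (j : ℕ) % s < s := Nat.mod_lt _ hs0
        refine le_trans (HSDaux.countP_map_le _ _ _ _ ?_)
          (hZb c hc ⟨(j : ℕ) % s, by omega⟩)
        intro z hz hmz
        rcases smlShape i z with ⟨⟨kz, az⟩, hpz⟩ | ⟨rz, hpz⟩
        · rw [hpz, HSDaux.mem_newHoles_inl] at hmz
          have hmm := (smlMemS i i z kz az hpz).2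
          have hcv : (kz.castSucc : Fin (s + 1)) = ⟨(j : ℕ) % s, by omega⟩ := by
            apply Fin.ext
            simp only [Fin.coe_castSucc]
            rw [hmz, Nat.add_mul_mod_self_left, Nat.mod_eq_of_lt kz.isLt]
          rw [← hcv]
          exact hmm
        · rw [hpz, HSDaux.mem_newHoles_inr] at hmz
          omega
      · refine le_trans (HSDaux.countP_map_le _ _ _ _ ?_) (hZb c hc (Fin.last s))
        intro z hz hmz
        rcases smlShape i z with ⟨⟨kz, az⟩, hpz⟩ | ⟨rz, hpz⟩
        · rw [hpz, HSDaux.mem_newHoles_inl] at hmz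
          have := HSDaux.hole_lt (i := i) (k := kz)
          omega
        · exact smlMemL i z rz hpz
  · -- pair condition
    intro x y hxy
    rcases x with ⟨i, k, a⟩ | rx
    · rcases y with ⟨i', k', a'⟩ | ry
      · -- both left
        by_cases hii : i = i'
        · subst hii
          by_cases hkk : k = k'
          · subst hkk
            exact absurd ⟨HSDaux.mem_newHoles_inl.mpr rfl, HSDaux.mem_newHoles_inl.mpr rfl⟩
              (hxy ⟨(k : ℕ) + s * (i : ℕ), Nat.lt_succ_of_lt HSDaux.hole_lt⟩)
          · -- same big hole, different small holes
            obtain ⟨x₀, hx₀m, hx₀⟩ := bigSurjS i k a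
            obtain ⟨y₀, hy₀m, hy₀⟩ := bigSurjS i k' a'
            have hne0 : x₀ ≠ y₀ := by
              intro hcon
              rw [hcon, hy₀] at hx₀
              simp only [Sum.inl.injEq, Prod.mk.injEq] at hx₀
              exact hkk hx₀.2.1.symm
            have hzero := HSDaux.countP_quad_zero_hole bigInj
              (fun b' hb' => hYb b' hb' i.castSucc) hx₀m hy₀m hne0
            rw [hx₀, hy₀] at hzero
            obtain ⟨zx, hzxm, hzx⟩ := smlSurjS i k a
            obtain ⟨zy, hzym, hzy⟩ := smlSurjS i k' a'
            have hsep : ∀ jh, ¬(zx ∈ hZ jh ∧ zy ∈ hZ jh) := by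
              rintro jh ⟨p1, p2⟩
              have e1 := (uZ _ _ hzxm).symm.trans (uZ _ _ p1)
              have e2 := (uZ _ _ hzym).symm.trans (uZ _ _ p2)
              have e3 := congrArg Fin.val (e1.trans e2.symm)
              simp only [Fin.coe_castSucc] at e3
              exact hkk (Fin.ext e3)
            have hone := hZp zx zy hsep
            have hmap := HSDaux.countP_quad_map_all (smlInj i) BZ zx zy
            rw [hzx, hzy] at hmap
            have hz2 := fun (i'' : Fin m) (hne'' : i'' ≠ i) =>
              HSDaux.countP_quad_zero_all (HSDaux.smallMap hZ idxZ hmemZ eZ eZl w i'') BZ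
                (Sum.inl (i, k, a) : HSDaux.XT h s v m w) (Sum.inl (i, k', a')) (by
                  intro za zb hsym
                  rw [Sym2.eq_iff] at hsym
                  rcases smlShape i'' za with ⟨pa, hpa⟩ | ⟨ra, hpa⟩ <;>
                    rcases smlShape i'' zb with ⟨pb, hpb⟩ | ⟨rb, hpb⟩ <;>
                    rcases hsym with ⟨f1, f2⟩ | ⟨f1, f2⟩ <;>
                    rw [hpa] at f1 <;> rw [hpb] at f2 <;>
                    simp only [Sum.inl.injEq, Sum.inr.injEq, Prod.mk.injEq, reduceCtorEq] at f1 f2 <;>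
                    (first | exact hne'' f1.1 | exact hne'' f2.1))
            refine ⟨?_, ?_, ?_⟩
            · rw [Multiset.countP_add, HSDaux.countP_sum, hzero.1,
                Finset.sum_eq_single_of_mem i (Finset.mem_univ i)
                  (fun b' _ hb' => (hz2 b' hb').1), hmap.1, hone.1] <;> omega
            · rw [Multiset.countP_add, HSDaux.countP_sum, hzero.2.1,
                Finset.sum_eq_single_of_mem i (Finset.mem_univ i)
                  (fun b' _ hb' => (hz2 b' hb').2.1), hmap.2.1, hone.2.1] <;> omega
            · rw [Multiset.countP_add, HSDaux.countP_sum, hzero.2.2,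
                Finset.sum_eq_single_of_mem i (Finset.mem_univ i)
                  (fun b' _ hb' => (hz2 b' hb').2.2), hmap.2.2, hone.2.2] <;> omega
        · -- different big holes
          obtain ⟨x₀, hx₀m, hx₀⟩ := bigSurjS i k a
          obtain ⟨y₀, hy₀m, hy₀⟩ := bigSurjS i' k' a'
          have hsep : ∀ jh, ¬(x₀ ∈ hY jh ∧ y₀ ∈ hY jh) := by
            rintro jh ⟨p1, p2⟩
            have e1 := (uY _ _ hx₀m).symm.trans (uY _ _ p1)
            have e2 := (uY _ _ hy₀m).symm.trans (uY _ _ p2)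
            have e3 := congrArg Fin.val (e1.trans e2.symm)
            simp only [Fin.coe_castSucc] at e3
            exact hii (Fin.ext e3)
          have hone := hYp x₀ y₀ hsep
          have hmap := HSDaux.countP_quad_map_all bigInj BY x₀ y₀
          rw [hx₀, hy₀] at hmap
          have hz2 := fun (i'' : Fin m) =>
            HSDaux.countP_quad_zero_all (HSDaux.smallMap hZ idxZ hmemZ eZ eZl w i'') BZ
              (Sum.inl (i, k, a) : HSDaux.XT h s v m w) (Sum.inl (i', k', a')) (by
                intro za zb hsym
                rw [Sym2.eq_iff] at hsym
                rcases smlShape i'' za with ⟨pa, hpa⟩ | ⟨ra, hpa⟩ <;>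
                  rcases smlShape i'' zb with ⟨pb, hpb⟩ | ⟨rb, hpb⟩ <;>
                  rcases hsym with ⟨f1, f2⟩ | ⟨f1, f2⟩ <;>
                  rw [hpa] at f1 <;> rw [hpb] at f2 <;>
                    simp only [Sum.inl.injEq, Sum.inr.injEq, Prod.mk.injEq, reduceCtorEq] at f1 f2 <;>
                    (first | exact hii (f1.1.symm.trans f2.1) | exact hii (f2.1.symm.trans f1.1)))
          refine ⟨?_, ?_, ?_⟩
          · rw [Multiset.countP_add, HSDaux.countP_sum, hmap.1, hone.1,
              Finset.sum_eq_zero (fun i'' _ => (hz2 i'').1)] <;> omega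
          · rw [Multiset.countP_add, HSDaux.countP_sum, hmap.2.1, hone.2.1,
              Finset.sum_eq_zero (fun i'' _ => (hz2 i'').2.1)] <;> omega
          · rw [Multiset.countP_add, HSDaux.countP_sum, hmap.2.2, hone.2.2,
              Finset.sum_eq_zero (fun i'' _ => (hz2 i'').2.2)] <;> omega
      · rcases ry with rw0 | rv
        · -- left and w-part
          obtain ⟨x₀, hx₀m, hx₀⟩ := bigSurjS i k a
          obtain ⟨y₀, hy₀m, hy₀⟩ := bigSurjL rw0
          have hsep : ∀ jh, ¬(x₀ ∈ hY jh ∧ y₀ ∈ hY jh) := by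
            rintro jh ⟨p1, p2⟩
            have e1 := (uY _ _ hx₀m).symm.trans (uY _ _ p1)
            have e2 := (uY _ _ hy₀m).symm.trans (uY _ _ p2)
            have e3 := congrArg Fin.val (e1.trans e2.symm)
            simp only [Fin.coe_castSucc, Fin.val_last] at e3
            have := i.isLt
            omega
          have hone := hYp x₀ y₀ hsep
          have hmap := HSDaux.countP_quad_map_all bigInj BY x₀ y₀
          rw [hx₀, hy₀] at hmap
          have hz2 := fun (i'' : Fin m) =>
            HSDaux.countP_quad_zero_all (HSDaux.smallMap hZ idxZ hmemZ eZ eZl w i'') BZ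
              (Sum.inl (i, k, a) : HSDaux.XT h s v m w) (Sum.inr (Sum.inl rw0)) (by
                intro za zb hsym
                rw [Sym2.eq_iff] at hsym
                rcases smlShape i'' za with ⟨pa, hpa⟩ | ⟨ra, hpa⟩ <;>
                  rcases smlShape i'' zb with ⟨pb, hpb⟩ | ⟨rb, hpb⟩ <;>
                  rcases hsym with ⟨f1, f2⟩ | ⟨f1, f2⟩ <;>
                  rw [hpa] at f1 <;> rw [hpb] at f2 <;>
                    simp only [Sum.inl.injEq, Sum.inr.injEq, Prod.mk.injEq, reduceCtorEq] at f1 f2 <;>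
                    (skip))
          refine ⟨?_, ?_, ?_⟩
          · rw [Multiset.countP_add, HSDaux.countP_sum, hmap.1, hone.1,
              Finset.sum_eq_zero (fun i'' _ => (hz2 i'').1)] <;> omega
          · rw [Multiset.countP_add, HSDaux.countP_sum, hmap.2.1, hone.2.1,
              Finset.sum_eq_zero (fun i'' _ => (hz2 i'').2.1)] <;> omega
          · rw [Multiset.countP_add, HSDaux.countP_sum, hmap.2.2, hone.2.2,
              Finset.sum_eq_zero (fun i'' _ => (hz2 i'').2.2)] <;> omega
        · -- left and v-part
          obtain ⟨zx, hzxm, hzx⟩ := smlSurjS i k a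
          obtain ⟨zy, hzym, hzy⟩ := smlSurjL i rv
          have hsep : ∀ jh, ¬(zx ∈ hZ jh ∧ zy ∈ hZ jh) := by
            rintro jh ⟨p1, p2⟩
            have e1 := (uZ _ _ hzxm).symm.trans (uZ _ _ p1)
            have e2 := (uZ _ _ hzym).symm.trans (uZ _ _ p2)
            have e3 := congrArg Fin.val (e1.trans e2.symm)
            simp only [Fin.coe_castSucc, Fin.val_last] at e3
            have := k.isLt
            omega
          have hone := hZp zx zy hsep
          have hmap := HSDaux.countP_quad_map_all (smlInj i) BZ zx zy
          rw [hzx, hzy] at hmap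
          have hzero := HSDaux.countP_quad_zero_all (HSDaux.bigMap hY idxY hmemY eY eYl v) BY
            (Sum.inl (i, k, a) : HSDaux.XT h s v m w) (Sum.inr (Sum.inr rv)) (by
              intro za zb hsym
              rw [Sym2.eq_iff] at hsym
              rcases bigShape za with ⟨pa, hpa⟩ | ⟨ra, hpa⟩ <;>
                rcases bigShape zb with ⟨pb, hpb⟩ | ⟨rb, hpb⟩ <;>
                rcases hsym with ⟨f1, f2⟩ | ⟨f1, f2⟩ <;>
                rw [hpa] at f1 <;> rw [hpb] at f2 <;>
                    simp only [Sum.inl.injEq, Sum.inr.injEq, Prod.mk.injEq, reduceCtorEq] at f1 f2 <;>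
                    (skip))
          have hz2 := fun (i'' : Fin m) (hne'' : i'' ≠ i) =>
            HSDaux.countP_quad_zero_all (HSDaux.smallMap hZ idxZ hmemZ eZ eZl w i'') BZ
              (Sum.inl (i, k, a) : HSDaux.XT h s v m w) (Sum.inr (Sum.inr rv)) (by
                intro za zb hsym
                rw [Sym2.eq_iff] at hsym
                rcases smlShape i'' za with ⟨pa, hpa⟩ | ⟨ra, hpa⟩ <;>
                  rcases smlShape i'' zb with ⟨pb, hpb⟩ | ⟨rb, hpb⟩ <;>
                  rcases hsym with ⟨f1, f2⟩ | ⟨f1, f2⟩ <;>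
                  rw [hpa] at f1 <;> rw [hpb] at f2 <;>
                    simp only [Sum.inl.injEq, Sum.inr.injEq, Prod.mk.injEq, reduceCtorEq] at f1 f2 <;>
                    (first | exact hne'' f1.1 | exact hne'' f2.1))
          refine ⟨?_, ?_, ?_⟩
          · rw [Multiset.countP_add, HSDaux.countP_sum, hzero.1,
              Finset.sum_eq_single_of_mem i (Finset.mem_univ i)
                (fun b' _ hb' => (hz2 b' hb').1), hmap.1, hone.1] <;> omega
          · rw [Multiset.countP_add, HSDaux.countP_sum, hzero.2.1,
              Finset.sum_eq_single_of_mem i (Finset.mem_univ i)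
                (fun b' _ hb' => (hz2 b' hb').2.1), hmap.2.1, hone.2.1] <;> omega
          · rw [Multiset.countP_add, HSDaux.countP_sum, hzero.2.2,
              Finset.sum_eq_single_of_mem i (Finset.mem_univ i)
                (fun b' _ hb' => (hz2 b' hb').2.2), hmap.2.2, hone.2.2] <;> omega
    · rcases y with ⟨i', k', a'⟩ | ry
      · rcases rx with rw0 | rv
        · -- w-part and left
          obtain ⟨x₀, hx₀m, hx₀⟩ := bigSurjL rw0
          obtain ⟨y₀, hy₀m, hy₀⟩ := bigSurjS i' k' a'
          have hsep : ∀ jh, ¬(x₀ ∈ hY jh ∧ y₀ ∈ hY jh) := by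
            rintro jh ⟨p1, p2⟩
            have e1 := (uY _ _ hx₀m).symm.trans (uY _ _ p1)
            have e2 := (uY _ _ hy₀m).symm.trans (uY _ _ p2)
            have e3 := congrArg Fin.val (e1.trans e2.symm)
            simp only [Fin.coe_castSucc, Fin.val_last] at e3
            have := i'.isLt
            omega
          have hone := hYp x₀ y₀ hsep
          have hmap := HSDaux.countP_quad_map_all bigInj BY x₀ y₀
          rw [hx₀, hy₀] at hmap
          have hz2 := fun (i'' : Fin m) =>
            HSDaux.countP_quad_zero_all (HSDaux.smallMap hZ idxZ hmemZ eZ eZl w i'') BZ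
              (Sum.inr (Sum.inl rw0) : HSDaux.XT h s v m w) (Sum.inl (i', k', a')) (by
                intro za zb hsym
                rw [Sym2.eq_iff] at hsym
                rcases smlShape i'' za with ⟨pa, hpa⟩ | ⟨ra, hpa⟩ <;>
                  rcases smlShape i'' zb with ⟨pb, hpb⟩ | ⟨rb, hpb⟩ <;>
                  rcases hsym with ⟨f1, f2⟩ | ⟨f1, f2⟩ <;>
                  rw [hpa] at f1 <;> rw [hpb] at f2 <;>
                    simp only [Sum.inl.injEq, Sum.inr.injEq, Prod.mk.injEq, reduceCtorEq] at f1 f2 <;>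
                    (skip))
          refine ⟨?_, ?_, ?_⟩
          · rw [Multiset.countP_add, HSDaux.countP_sum, hmap.1, hone.1,
              Finset.sum_eq_zero (fun i'' _ => (hz2 i'').1)] <;> omega
          · rw [Multiset.countP_add, HSDaux.countP_sum, hmap.2.1, hone.2.1,
              Finset.sum_eq_zero (fun i'' _ => (hz2 i'').2.1)] <;> omega
          · rw [Multiset.countP_add, HSDaux.countP_sum, hmap.2.2, hone.2.2,
              Finset.sum_eq_zero (fun i'' _ => (hz2 i'').2.2)] <;> omega
        · -- v-part and left
          obtain ⟨zx, hzxm, hzx⟩ := smlSurjL i' rv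
          obtain ⟨zy, hzym, hzy⟩ := smlSurjS i' k' a'
          have hsep : ∀ jh, ¬(zx ∈ hZ jh ∧ zy ∈ hZ jh) := by
            rintro jh ⟨p1, p2⟩
            have e1 := (uZ _ _ hzxm).symm.trans (uZ _ _ p1)
            have e2 := (uZ _ _ hzym).symm.trans (uZ _ _ p2)
            have e3 := congrArg Fin.val (e1.trans e2.symm)
            simp only [Fin.coe_castSucc, Fin.val_last] at e3
            have := k'.isLt
            omega
          have hone := hZp zx zy hsep
          have hmap := HSDaux.countP_quad_map_all (smlInj i') BZ zx zy
          rw [hzx, hzy] at hmap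
          have hzero := HSDaux.countP_quad_zero_all (HSDaux.bigMap hY idxY hmemY eY eYl v) BY
            (Sum.inr (Sum.inr rv) : HSDaux.XT h s v m w) (Sum.inl (i', k', a')) (by
              intro za zb hsym
              rw [Sym2.eq_iff] at hsym
              rcases bigShape za with ⟨pa, hpa⟩ | ⟨ra, hpa⟩ <;>
                rcases bigShape zb with ⟨pb, hpb⟩ | ⟨rb, hpb⟩ <;>
                rcases hsym with ⟨f1, f2⟩ | ⟨f1, f2⟩ <;>
                rw [hpa] at f1 <;> rw [hpb] at f2 <;>
                    simp only [Sum.inl.injEq, Sum.inr.injEq, Prod.mk.injEq, reduceCtorEq] at f1 f2 <;>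
                    (skip))
          have hz2 := fun (i'' : Fin m) (hne'' : i'' ≠ i') =>
            HSDaux.countP_quad_zero_all (HSDaux.smallMap hZ idxZ hmemZ eZ eZl w i'') BZ
              (Sum.inr (Sum.inr rv) : HSDaux.XT h s v m w) (Sum.inl (i', k', a')) (by
                intro za zb hsym
                rw [Sym2.eq_iff] at hsym
                rcases smlShape i'' za with ⟨pa, hpa⟩ | ⟨ra, hpa⟩ <;>
                  rcases smlShape i'' zb with ⟨pb, hpb⟩ | ⟨rb, hpb⟩ <;>
                  rcases hsym with ⟨f1, f2⟩ | ⟨f1, f2⟩ <;>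
                  rw [hpa] at f1 <;> rw [hpb] at f2 <;>
                    simp only [Sum.inl.injEq, Sum.inr.injEq, Prod.mk.injEq, reduceCtorEq] at f1 f2 <;>
                    (first | exact hne'' f1.1 | exact hne'' f2.1))
          refine ⟨?_, ?_, ?_⟩
          · rw [Multiset.countP_add, HSDaux.countP_sum, hzero.1,
              Finset.sum_eq_single_of_mem i' (Finset.mem_univ i')
                (fun b' _ hb' => (hz2 b' hb').1), hmap.1, hone.1] <;> omega
          · rw [Multiset.countP_add, HSDaux.countP_sum, hzero.2.1,
              Finset.sum_eq_single_of_mem i' (Finset.mem_univ i')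
                (fun b' _ hb' => (hz2 b' hb').2.1), hmap.2.1, hone.2.1] <;> omega
          · rw [Multiset.countP_add, HSDaux.countP_sum, hzero.2.2,
              Finset.sum_eq_single_of_mem i' (Finset.mem_univ i')
                (fun b' _ hb' => (hz2 b' hb').2.2), hmap.2.2, hone.2.2] <;> omega
      · -- both in the last hole: impossible
        exact absurd ⟨HSDaux.mem_newHoles_inr.mpr (by simp),
          HSDaux.mem_newHoles_inr.mpr (by simp)⟩ (hxy (Fin.last (s * m)))
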